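/- Let $\mu$ be a non-atomic finite positive measure on $I=[0,T]$, let $c \in L^1(I,\mu)$ and $p \in L^\infty(I,\mu)$ be nonnegative functions, and let $\alpha \geq 0$. Assume that for $\mu$-a.e. $t \in I$, $p(t) \leq \alpha + \int_{[0,t]} c(s)p(s)\,d\mu(s)$. Then for $\mu$-a.e. $t \in I$, $p(t) \leq \alpha\exp\big(\int_{[0,t]} c(s)\,d\mu(s)\big)$. -/

import Mathlib

open MeasureTheory Set Filter
open scoped Topology ENNReal

noncomputable def cdfR (ν : Measure ℝ) : ℝ → ℝ := fun s => (ν (Set.Iic s)).toReal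

lemma cdfR_mono (ν : Measure ℝ) [IsFiniteMeasure ν] : Monotone (cdfR ν) := fun a b h =>
  ENNReal.toReal_mono (measure_ne_top _ _) (measure_mono (Iic_subset_Iic.2 h))

lemma cdfR_nonneg (ν : Measure ℝ) (s : ℝ) : 0 ≤ cdfR ν s := ENNReal.toReal_nonneg

lemma tail_bound (ν : Measure ℝ) [IsFiniteMeasure ν] [NullSingletonClass ν] (t x : ℝ) (hx : 0 < x) :
    (ν.restrict (Iic t)) {s | x ≤ cdfR ν s}
      ≤ ENNReal.ofReal (cdfR ν t - x) := by
  set F : ℝ → ℝ := cdfR ν with hF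
  have Fmono : Monotone F := cdfR_mono ν
  have Smble : MeasurableSet {s | x ≤ F s} := measurableSet_le measurable_const Fmono.measurable
  have Fle : ∀ s, ENNReal.ofReal x ≤ ν (Iic s) ↔ x ≤ F s := by
    intro s
    constructor
    · intro h
      calc x = (ENNReal.ofReal x).toReal := by rw [ENNReal.toReal_ofReal hx.le]
        _ ≤ _ := ENNReal.toReal_mono (measure_ne_top _ _) h
    · intro h
      exact ENNReal.ofReal_le_of_le_toReal h
  rw [Measure.restrict_apply Smble]
  by_cases hxt : x ≤ F t
  · -- S nonempty
    have hblow : ∃ s₀ : ℝ, ν (Iic s₀) < ENNReal.ofReal x := by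
      have h0 : Tendsto (fun n : ℕ => ν (Iic (-(n:ℝ)))) atTop (𝓝 (ν (⋂ n : ℕ, Iic (-(n:ℝ))))) :=
        tendsto_measure_iInter_atTop (fun n => (measurableSet_Iic).nullMeasurableSet)
          (fun a b hab => Iic_subset_Iic.2 (neg_le_neg (Nat.cast_le.2 hab)))
          ⟨0, measure_ne_top _ _⟩
      have hempty : (⋂ n : ℕ, Iic (-(n:ℝ))) = ∅ := by
        ext y; simp only [mem_iInter, mem_Iic, mem_empty_iff_false, iff_false, not_forall, not_le]
        obtain ⟨n, hn⟩ := exists_nat_gt (-y)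
        exact ⟨n, by linarith⟩
      rw [hempty, measure_empty] at h0
      have hlt : (0:ℝ≥0∞) < ENNReal.ofReal x := by simpa using hx
      obtain ⟨n, hn⟩ := (h0.eventually_lt_const hlt).exists
      exact ⟨-(n:ℝ), hn⟩
    obtain ⟨s₀, hs₀⟩ := hblow
    have hbdd : BddBelow {s | x ≤ F s} := by
      refine ⟨s₀, fun s hs => ?_⟩
      by_contra hlt
      push_neg at hlt
      have h2 : ν (Iic s) < ENNReal.ofReal x :=
        lt_of_le_of_lt (measure_mono (Iic_subset_Iic.2 hlt.le)) hs₀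
      exact absurd ((Fle s).2 hs) h2.not_ge
    have hne : t ∈ {s | x ≤ F s} := hxt
    set u := sInf {s | x ≤ F s} with hu
    have hut : u ≤ t := csInf_le hbdd hne
    -- x ≤ F u
    have hFu : ENNReal.ofReal x ≤ ν (Iic u) := by
      have hseq : Tendsto (fun n : ℕ => ν (Iic (u + 1/(n+1)))) atTop
          (𝓝 (ν (⋂ n : ℕ, Iic (u + 1/(n+1))))) :=
        tendsto_measure_iInter_atTop (fun n => (measurableSet_Iic).nullMeasurableSet)
          (fun a b hab => Iic_subset_Iic.2 (by
            have : (1:ℝ)/(b+1) ≤ 1/(a+1) := by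
              apply one_div_le_one_div_of_le (by positivity)
              have : (a:ℝ) ≤ b := Nat.cast_le.2 hab
              linarith
            linarith))
          ⟨0, measure_ne_top _ _⟩
      have hiInt : (⋂ n : ℕ, Iic (u + 1/(n+1))) = Iic u := by
        ext y
        simp only [mem_iInter, mem_Iic]
        constructor
        · intro h
          refine le_of_forall_pos_le_add fun ε hε => ?_
          obtain ⟨n, hn⟩ := exists_nat_one_div_lt hε
          exact (h n).trans (by linarith)
        · intro h n
          have : (0:ℝ) < 1/(n+1) := by positivity
          linarith
      rw [hiInt] at hseq
      refine ge_of_tendsto hseq (Eventually.of_forall fun n => ?_)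
      have hpos : (0:ℝ) < 1/(n+1) := by positivity
      obtain ⟨s, hs, hsu⟩ := csInf_lt_iff hbdd ⟨t, hne⟩ |>.1 (by linarith : u < u + 1/(n+1))
      exact ((Fle s).2 hs).trans (measure_mono (Iic_subset_Iic.2 hsu.le))
    have hsub : {s | x ≤ F s} ∩ Iic t ⊆ Icc u t :=
      fun s hs => ⟨csInf_le hbdd hs.1, hs.2⟩
    calc ν ({s | x ≤ F s} ∩ Iic t) ≤ ν (Icc u t) := measure_mono hsub
      _ = ν (Iic t) - ν (Iio u) := by
          have hunion : Iio u ∪ Icc u t = Iic t := Iio_union_Icc_eq_Iic hut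
          have hdisj : Disjoint (Iio u) (Icc u t) := by
            apply Set.disjoint_left.2
            intro s hs hs2
            exact absurd hs2.1 (not_le.2 hs)
          have h3 := measure_union (μ := ν) hdisj measurableSet_Icc
          rw [hunion] at h3
          rw [h3, add_comm, ENNReal.add_sub_cancel_right (measure_ne_top _ _)]
      _ ≤ ν (Iic t) - ENNReal.ofReal x := by
          apply tsub_le_tsub_left
          calc ENNReal.ofReal x ≤ ν (Iic u) := hFu
            _ = ν (Iio u) := (measure_congr (Iio_ae_eq_Iic (μ := ν) (a := u))).symm
      _ ≤ ENNReal.ofReal (cdfR ν t - x) := by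
          rw [ENNReal.ofReal_sub _ hx.le]
          refine tsub_le_tsub_right ?_ _
          exact (ENNReal.ofReal_toReal (measure_ne_top ν (Iic t))).symm.le
  · -- S ∩ Iic t empty
    have : {s | x ≤ F s} ∩ Iic t = ∅ := by
      ext s; simp only [mem_inter_iff, mem_setOf_eq, mem_Iic, mem_empty_iff_false, iff_false,
        not_and]
      intro hxs hst
      exact hxt (hxs.trans (Fmono hst))
    rw [this, measure_empty]
    exact zero_le

lemma exp_integral_le (ν : Measure ℝ) [IsFiniteMeasure ν] [NullSingletonClass ν] (t : ℝ) :
    ∫ s in Iic t, Real.exp (cdfR ν s) ∂ν ≤ Real.exp (cdfR ν t) - 1 := by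
  set F : ℝ → ℝ := cdfR ν with hF
  set m : ℝ := cdfR ν t with hm
  have hm0 : 0 ≤ m := cdfR_nonneg ν t
  have Fmono : Monotone F := cdfR_mono ν
  have Fmble : Measurable F := Fmono.measurable
  have Fnn : ∀ s, 0 ≤ F s := cdfR_nonneg ν
  have FleM : ∀ s ∈ Iic t, F s ≤ m := fun s hs => Fmono hs
  -- layer cake
  have layer := lintegral_comp_eq_lintegral_meas_le_mul (ν.restrict (Iic t))
      (Eventually.of_forall Fnn) Fmble.aemeasurable
      (fun x _ => Real.continuous_exp.intervalIntegrable 0 x)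
      (Eventually.of_forall fun x => (Real.exp_pos x).le)
  simp only [integral_exp, Real.exp_zero] at layer
  -- bound RHS of layer cake
  have hbound : (∫⁻ x in Ioi 0, (ν.restrict (Iic t)) {s | x ≤ F s} * ENNReal.ofReal (Real.exp x))
      ≤ ENNReal.ofReal (Real.exp m - 1 - m) := by
    have step1 : (∫⁻ x in Ioi 0, (ν.restrict (Iic t)) {s | x ≤ F s} * ENNReal.ofReal (Real.exp x))
        ≤ ∫⁻ x in Ioi 0, ENNReal.ofReal (m - x) * ENNReal.ofReal (Real.exp x) := by
      refine lintegral_mono_ae ?_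
      filter_upwards [self_mem_ae_restrict measurableSet_Ioi] with x hx
      exact mul_le_mul_left (tail_bound ν t x hx) _
    refine step1.trans ?_
    have hsplit : (Ioi (0:ℝ)) = Ioc 0 m ∪ Ioi m := (Ioc_union_Ioi_eq_Ioi hm0).symm
    rw [hsplit, lintegral_union measurableSet_Ioi Ioc_disjoint_Ioi_same]
    have h2 : (∫⁻ x in Ioi m, ENNReal.ofReal (m - x) * ENNReal.ofReal (Real.exp x)) = 0 := by
      have : ∀ x ∈ Ioi m, ENNReal.ofReal (m - x) * ENNReal.ofReal (Real.exp x) = 0 := by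
        intro x hx
        rw [ENNReal.ofReal_eq_zero.2 (by linarith [mem_Ioi.1 hx] : m - x ≤ 0), zero_mul]
      rw [setLIntegral_congr_fun measurableSet_Ioi this, lintegral_zero]
    have h3 : (∫⁻ x in Ioc 0 m, ENNReal.ofReal (m - x) * ENNReal.ofReal (Real.exp x))
        = ENNReal.ofReal (∫ x in Ioc 0 m, (m - x) * Real.exp x) := by
      rw [setLIntegral_congr_fun measurableSet_Ioc (fun x hx => by
        rw [← ENNReal.ofReal_mul (by linarith [hx.2] : (0:ℝ) ≤ m - x)])]
      rw [← ofReal_integral_eq_lintegral_ofReal]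
      · exact ((continuous_const.sub continuous_id).mul Real.continuous_exp).integrableOn_Ioc
      · filter_upwards [self_mem_ae_restrict measurableSet_Ioc] with x hx
        exact mul_nonneg (by linarith [hx.2]) (Real.exp_pos x).le
    have h4 : (∫ x in Ioc 0 m, (m - x) * Real.exp x) = Real.exp m - m - 1 := by
      rw [← intervalIntegral.integral_of_le hm0]
      have : ∀ x ∈ uIcc (0:ℝ) m, HasDerivAt (fun y => (m + 1 - y) * Real.exp y)
          ((m - x) * Real.exp x) x := by
        intro x _
        have h := ((hasDerivAt_id x).const_sub (m+1)).mul (Real.hasDerivAt_exp x)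
        convert h using 1
        · rfl
        · rfl
        · rfl
        simp only [id]
        ring
      rw [intervalIntegral.integral_eq_sub_of_hasDerivAt this
        (((continuous_const.sub continuous_id).mul Real.continuous_exp).intervalIntegrable 0 m)]
      simp [Real.exp_zero]
      ring
    rw [h2, h3, h4, add_zero]
    exact ENNReal.ofReal_le_ofReal (by ring_nf; exact le_rfl)
  rw [← layer] at hbound
  -- convert to Bochner
  have hint1 : Integrable (fun s => Real.exp (F s)) (ν.restrict (Iic t)) := by
    refine Integrable.mono' (integrable_const (Real.exp m))
      (Real.measurable_exp.comp Fmble).aestronglyMeasurable ?_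
    filter_upwards [self_mem_ae_restrict measurableSet_Iic] with s hs
    rw [Real.norm_eq_abs, abs_of_pos (Real.exp_pos _)]
    exact Real.exp_le_exp.2 (FleM s hs)
  have heq : ∫ s in Iic t, (Real.exp (F s) - 1) ∂ν
      = (∫⁻ s in Iic t, ENNReal.ofReal (Real.exp (F s) - 1) ∂ν).toReal := by
    rw [integral_eq_lintegral_of_nonneg_ae]
    · filter_upwards [] with s
      exact sub_nonneg.2 (Real.one_le_exp (Fnn s))
    · exact ((Real.measurable_exp.comp Fmble).sub measurable_const).aestronglyMeasurable
  have hle : ∫ s in Iic t, (Real.exp (F s) - 1) ∂ν ≤ Real.exp m - 1 - m := by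
    rw [heq]
    calc (∫⁻ s in Iic t, ENNReal.ofReal (Real.exp (F s) - 1) ∂ν).toReal
        ≤ (ENNReal.ofReal (Real.exp m - 1 - m)).toReal :=
          ENNReal.toReal_mono ENNReal.ofReal_ne_top hbound
      _ = Real.exp m - 1 - m := ENNReal.toReal_ofReal (by nlinarith [Real.add_one_le_exp m])
  have hsub : ∫ s in Iic t, (Real.exp (F s) - 1) ∂ν
      = (∫ s in Iic t, Real.exp (F s) ∂ν) - m := by
    rw [integral_sub hint1 (integrable_const 1)]
    simp [hm, hF, cdfR, Measure.real]
  linarith [hle, hsub.symm.le]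

/-- Gronwall lemma for a non-atomic positive finite measure (Lemma 2.7). -/
theorem gronwall_nonatomic_measure (T : ℝ) (hT : 0 < T)
    (μ : Measure ℝ) [IsFiniteMeasure μ]
    (hna : ∀ t : ℝ, μ {t} = 0)
    (c p : ℝ → ℝ) (hc : Integrable c μ) (hpm : Measurable p)
    (hc0 : ∀ t ∈ Set.Icc 0 T, 0 ≤ c t) (hp0 : ∀ t ∈ Set.Icc 0 T, 0 ≤ p t)
    (hpb : ∃ C : ℝ, ∀ t ∈ Set.Icc 0 T, p t ≤ C)
    (α : ℝ) (hα : 0 ≤ α)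
    (hineq : ∀ᵐ t ∂μ, t ∈ Set.Icc 0 T →
      p t ≤ α + ∫ s in Set.Icc 0 t, c s * p s ∂μ) :
    ∀ᵐ t ∂μ, t ∈ Set.Icc 0 T →
      p t ≤ α * Real.exp (∫ s in Set.Icc 0 t, c s ∂μ) := by
  obtain ⟨C, hC⟩ := hpb
  set ν : Measure ℝ := (μ.restrict (Set.Icc 0 T)).withDensity
    (fun s => ENNReal.ofReal (c s)) with hν
  haveI hfin : IsFiniteMeasure ν :=
    isFiniteMeasure_withDensity_ofReal (hc.restrict).hasFiniteIntegral
  haveI hnoatom : NullSingletonClass ν := by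
    constructor
    intro u
    rw [hν, withDensity_apply _ (measurableSet_singleton u)]
    have h0 : (μ.restrict (Set.Icc 0 T)) {u} = 0 :=
      le_antisymm ((Measure.restrict_apply_le _ _).trans (hna u).le) zero_le
    exact setLIntegral_measure_zero _ _ h0
  set F : ℝ → ℝ := cdfR ν with hF
  have Fmono : Monotone F := cdfR_mono ν
  have Fmble : Measurable F := Fmono.measurable
  have Fnn : ∀ s, 0 ≤ F s := cdfR_nonneg ν
  -- identification of F with the cumulative integral of c
  have hset : ∀ t ∈ Set.Icc (0:ℝ) T, Iic t ∩ Set.Icc 0 T = Set.Icc 0 t := by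
    intro t ht
    ext s
    simp only [mem_inter_iff, mem_Iic, mem_Icc]
    constructor
    · rintro ⟨h1, h2, _⟩; exact ⟨h2, h1⟩
    · rintro ⟨h1, h2⟩; exact ⟨h2, h1, h2.trans ht.2⟩
  have hcnn : ∀ t ∈ Set.Icc (0:ℝ) T, 0 ≤ᵐ[μ.restrict (Set.Icc 0 t)] c := by
    intro t ht
    refine ae_restrict_of_forall_mem measurableSet_Icc fun s hs => ?_
    exact hc0 s ⟨hs.1, hs.2.trans ht.2⟩
  have hFeq : ∀ t ∈ Set.Icc (0:ℝ) T, ν (Iic t) = ENNReal.ofReal (∫ s in Set.Icc 0 t, c s ∂μ) := by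
    intro t ht
    rw [hν, withDensity_apply _ measurableSet_Iic, Measure.restrict_restrict measurableSet_Iic,
      hset t ht, ← ofReal_integral_eq_lintegral_ofReal hc.restrict (hcnn t ht)]
  have hFval : ∀ t ∈ Set.Icc (0:ℝ) T, F t = ∫ s in Set.Icc 0 t, c s ∂μ := by
    intro t ht
    rw [hF, cdfR, hFeq t ht, ENNReal.toReal_ofReal (setIntegral_nonneg measurableSet_Icc
      (fun s hs => hc0 s ⟨hs.1, hs.2.trans ht.2⟩))]
  -- translation of ν-integrals into μ-integrals
  have hconv : ∀ t ∈ Set.Icc (0:ℝ) T, ∀ f : ℝ → ℝ,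
      (∫ s in Iic t, f s ∂ν) = ∫ s in Set.Icc 0 t, c s * f s ∂μ := by
    intro t ht f
    have hrw : ν.restrict (Set.Iic t)
        = (μ.restrict (Set.Icc 0 t)).withDensity (fun s => ((c s).toNNReal : ℝ≥0∞)) := by
      rw [hν, restrict_withDensity measurableSet_Iic, Measure.restrict_restrict measurableSet_Iic,
        hset t ht]
      rfl
    have haem : AEMeasurable (fun s => (c s).toNNReal) (μ.restrict (Set.Icc 0 t)) :=
      measurable_real_toNNReal.comp_aemeasurable (hc.restrict (s := Set.Icc 0 t)).aemeasurable
    rw [hrw, integral_withDensity_eq_integral_smul₀ haem f]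
    refine setIntegral_congr_fun measurableSet_Icc fun s hs => ?_
    have : ((c s).toNNReal : ℝ) = c s := Real.coe_toNNReal _ (hc0 s ⟨hs.1, hs.2.trans ht.2⟩)
    simp [NNReal.smul_def, this]
  -- the key integral inequality
  have hkey : ∀ t ∈ Set.Icc (0:ℝ) T,
      ∫ s in Set.Icc 0 t, c s * Real.exp (F s) ∂μ ≤ Real.exp (F t) - 1 := by
    intro t ht
    rw [← hconv t ht _]
    exact exp_integral_le ν t
  -- setup for the iteration
  set M := F T with hM
  set θ := 1 - Real.exp (-M) with hθ
  have hM0 : 0 ≤ M := Fnn T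
  have hθ0 : 0 ≤ θ := by
    have : Real.exp (-M) ≤ 1 := Real.exp_le_one_iff.2 (by linarith)
    rw [hθ]; linarith
  have hθ1 : θ < 1 := by have := Real.exp_pos (-M); rw [hθ]; linarith
  set a₀ := max C α with ha₀
  have ha₀α : α ≤ a₀ := le_max_right _ _
  have hFleM : ∀ s ≤ T, F s ≤ M := fun s hs => Fmono hs
  -- integrability facts
  have hint_cp : ∀ t ∈ Set.Icc (0:ℝ) T,
      Integrable (fun s => c s * p s) (μ.restrict (Set.Icc 0 t)) := by
    intro t ht
    refine Integrable.mono' ((hc.restrict.abs).const_mul (max C 0))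
      (hc.restrict.aestronglyMeasurable.mul hpm.aestronglyMeasurable) ?_
    filter_upwards [self_mem_ae_restrict measurableSet_Icc] with s hs
    have hsT : s ∈ Set.Icc 0 T := ⟨hs.1, hs.2.trans ht.2⟩
    rw [Real.norm_eq_abs, abs_mul, abs_of_nonneg (hp0 s hsT)]
    calc |c s| * p s ≤ |c s| * (max C 0) :=
        mul_le_mul_of_nonneg_left ((hC s hsT).trans (le_max_left _ _)) (abs_nonneg _)
      _ = (max C 0) * |c s| := mul_comm _ _
  have hint_cexp : ∀ t ∈ Set.Icc (0:ℝ) T, ∀ a : ℝ, 0 ≤ a →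
      Integrable (fun s => c s * (a * Real.exp (F s))) (μ.restrict (Set.Icc 0 t)) := by
    intro t ht a ha
    refine Integrable.mono' ((hc.restrict.abs).const_mul (a * Real.exp M))
      (hc.restrict.aestronglyMeasurable.mul
        (((Real.measurable_exp.comp Fmble).const_mul a).aestronglyMeasurable)) ?_
    filter_upwards [self_mem_ae_restrict measurableSet_Icc] with s hs
    rw [Real.norm_eq_abs, abs_mul, abs_of_nonneg (by positivity : 0 ≤ a * Real.exp (F s))]
    rw [mul_comm (a * Real.exp M) |c s|]
    apply mul_le_mul_of_nonneg_left _ (abs_nonneg _)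
    exact mul_le_mul_of_nonneg_left (Real.exp_le_exp.2 (hFleM s (hs.2.trans ht.2))) ha
  -- the iteration step
  have hstep : ∀ a : ℝ, α ≤ a →
      (∀ᵐ t ∂μ, t ∈ Set.Icc 0 T → p t ≤ a * Real.exp (F t)) →
      (∀ᵐ t ∂μ, t ∈ Set.Icc 0 T → p t ≤ (α + (a - α) * θ) * Real.exp (F t)) := by
    intro a haα hQ
    have ha0 : 0 ≤ a := hα.trans haα
    filter_upwards [hineq] with t hit ht
    have h1 : ∫ s in Set.Icc 0 t, c s * p s ∂μ
        ≤ ∫ s in Set.Icc 0 t, c s * (a * Real.exp (F s)) ∂μ := by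
      refine integral_mono_ae (hint_cp t ht) (hint_cexp t ht a ha0) ?_
      filter_upwards [ae_restrict_of_ae hQ, self_mem_ae_restrict measurableSet_Icc] with s hs1 hs2
      have hsT : s ∈ Set.Icc 0 T := ⟨hs2.1, hs2.2.trans ht.2⟩
      exact mul_le_mul_of_nonneg_left (hs1 hsT) (hc0 s hsT)
    have h2 : ∫ s in Set.Icc 0 t, c s * (a * Real.exp (F s)) ∂μ
        = a * ∫ s in Set.Icc 0 t, c s * Real.exp (F s) ∂μ := by
      rw [← integral_const_mul]
      exact integral_congr_ae (ae_of_all _ fun s => by ring)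
    have h3 := hkey t ht
    have h4 : p t ≤ α + a * (Real.exp (F t) - 1) := by
      calc p t ≤ α + ∫ s in Set.Icc 0 t, c s * p s ∂μ := hit ht
        _ ≤ α + a * ∫ s in Set.Icc 0 t, c s * Real.exp (F s) ∂μ := by
            rw [← h2]; linarith
        _ ≤ α + a * (Real.exp (F t) - 1) := by nlinarith
    have hE1 : 1 ≤ Real.exp (F t) := Real.one_le_exp (Fnn t)
    have hEM : Real.exp (-M) * Real.exp (F t) ≤ 1 := by
      rw [← Real.exp_add]
      exact Real.exp_le_one_iff.2 (by linarith [hFleM t ht.2])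
    have expand : (α + (a - α) * θ) * Real.exp (F t) - (α + a * (Real.exp (F t) - 1))
        = (a - α) * (1 - Real.exp (-M) * Real.exp (F t)) := by
      rw [hθ]; ring
    nlinarith [mul_nonneg (sub_nonneg.2 haα) (sub_nonneg.2 hEM)]
  -- iterate
  have hQn : ∀ n : ℕ, ∀ᵐ t ∂μ, t ∈ Set.Icc 0 T →
      p t ≤ (α + (a₀ - α) * θ ^ n) * Real.exp (F t) := by
    intro n
    induction n with
    | zero =>
      refine Eventually.of_forall fun t ht => ?_
      have h1 : p t ≤ a₀ := (hC t ht).trans (le_max_left _ _)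
      have h2 : a₀ ≤ (α + (a₀ - α) * θ ^ 0) * Real.exp (F t) := by
        have hE1 : 1 ≤ Real.exp (F t) := Real.one_le_exp (Fnn t)
        have ha₀0 : 0 ≤ a₀ := hα.trans ha₀α
        calc a₀ = a₀ * 1 := (mul_one _).symm
          _ ≤ a₀ * Real.exp (F t) := by nlinarith
          _ = (α + (a₀ - α) * θ ^ 0) * Real.exp (F t) := by ring
      exact h1.trans h2
    | succ n ih =>
      have haα' : α ≤ α + (a₀ - α) * θ ^ n := by
        have : 0 ≤ (a₀ - α) * θ ^ n := mul_nonneg (by linarith) (pow_nonneg hθ0 n)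
        linarith
      have h := hstep _ haα' ih
      have heq : α + (α + (a₀ - α) * θ ^ n - α) * θ = α + (a₀ - α) * θ ^ (n + 1) := by ring
      rwa [heq] at h
  -- pass to the limit
  have hfinal : ∀ᵐ t ∂μ, t ∈ Set.Icc 0 T → p t ≤ α * Real.exp (F t) := by
    filter_upwards [ae_all_iff.2 hQn] with t hall ht
    have h0 : Tendsto (fun n : ℕ => θ ^ n) atTop (𝓝 0) :=
      tendsto_pow_atTop_nhds_zero_of_lt_one hθ0 hθ1
    have hten : Tendsto (fun n : ℕ => (α + (a₀ - α) * θ ^ n) * Real.exp (F t)) atTop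
        (𝓝 (α * Real.exp (F t))) := by
      have := ((h0.const_mul (a₀ - α)).const_add α).mul_const (Real.exp (F t))
      simpa using this
    exact ge_of_tendsto hten (Eventually.of_forall fun n => hall n ht)
  filter_upwards [hfinal] with t h ht
  have := h ht
  rwa [hFval t ht] at this
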